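/- arXiv:1703.09863 — 2 statements merged into one kernel-verified Lean document; each statement's English description precedes it below -/
import Mathlib

section
/- Let s_λ denote the unique small solution of s²·ln(R/s) = 2a/λ̄ with λ̄ = 4πλ/ln λ. Then s_λ = (√a / √(πλ)) · (1 + O(ln ln λ / ln λ)) as λ → ∞; that is, there exist constants C, λ₀ > 0 such that for λ ≥ λ₀, |s_λ · √(πλ)/√a − 1| ≤ C · ln ln λ / ln λ. -/
open Real

lemma log_le_two_sqrt' {x : ℝ} (hx : 0 < x) : Real.log x ≤ 2 * Real.sqrt x := by
  have h1 : Real.log x = 2 * Real.log (Real.sqrt x) := by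
    rw [Real.log_sqrt hx.le]; ring
  have h2 : Real.log (Real.sqrt x) ≤ Real.sqrt x - 1 :=
    Real.log_le_sub_one_of_pos (Real.sqrt_pos.mpr hx)
  nlinarith [Real.sqrt_nonneg x]

set_option maxHeartbeats 1000000 in
theorem stmt4 (R a : ℝ) (hR : 0 < R) (ha : 0 < a) (s : ℝ → ℝ)
    (hs : ∀ᶠ l in Filter.atTop,
      s l ∈ Set.Ioo 0 (R / Real.exp (1 / 2)) ∧
      (s l) ^ 2 * Real.log (R / s l) = 2 * a / (4 * Real.pi * l / Real.log l)) :
    ∃ C > (0 : ℝ), ∃ l₀ > (0 : ℝ), ∀ l ≥ l₀,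
      |s l * Real.sqrt (Real.pi * l) / Real.sqrt a - 1| ≤
        C * Real.log (Real.log l) / Real.log l := by
  obtain ⟨N, hN⟩ := Filter.eventually_atTop.mp hs
  set K : ℝ := Real.log R - Real.log a / 2 + Real.log Real.pi / 2 with hK
  set G₀ : ℝ := 1000 * (1 + |Real.log R| + |Real.log a| + |Real.log Real.pi|) + 64 with hG₀
  refine ⟨3 + 3 * |K|, by positivity, max N (Real.exp G₀),
    lt_of_lt_of_le (Real.exp_pos _) (le_max_right _ _), ?_⟩
  intro l hl
  have hπ : (0 : ℝ) < Real.pi := Real.pi_pos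
  have hlexp : Real.exp G₀ ≤ l := le_trans (le_max_right _ _) hl
  have hlpos : 0 < l := lt_of_lt_of_le (Real.exp_pos _) hlexp
  have hπl : 0 < Real.pi * l := mul_pos hπ hlpos
  obtain ⟨⟨hσpos, hσR⟩, heq0⟩ := hN l (le_trans (le_max_left _ _) hl)
  set σ := s l with hσdef
  set g := Real.log l with hg
  have hgG : G₀ ≤ g := (Real.le_log_iff_exp_le hlpos).mpr hlexp
  have hRb : -(g / 1000) ≤ Real.log R ∧ Real.log R ≤ g / 1000 := by
    refine abs_le.mp ?_
    have h1 := abs_nonneg (Real.log a); have h2 := abs_nonneg (Real.log Real.pi)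
    rw [hG₀] at hgG; linarith only [h1, h2, hgG]
  have hab : -(g / 1000) ≤ Real.log a ∧ Real.log a ≤ g / 1000 := by
    refine abs_le.mp ?_
    have h1 := abs_nonneg (Real.log R); have h2 := abs_nonneg (Real.log Real.pi)
    rw [hG₀] at hgG; linarith only [h1, h2, hgG]
  have hπb : -(g / 1000) ≤ Real.log Real.pi ∧ Real.log Real.pi ≤ g / 1000 := by
    refine abs_le.mp ?_
    have h1 := abs_nonneg (Real.log R); have h2 := abs_nonneg (Real.log a)
    rw [hG₀] at hgG; linarith only [h1, h2, hgG]
  have hg64 : (64 : ℝ) ≤ g := by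
    have h1 := abs_nonneg (Real.log R); have h2 := abs_nonneg (Real.log a)
    have h3 := abs_nonneg (Real.log Real.pi); rw [hG₀] at hgG
    linarith only [h1, h2, h3, hgG]
  have hgpos : 0 < g := by linarith only [hg64]
  set gg := Real.log g with hgg
  have hgg1 : (1 : ℝ) ≤ gg := by
    rw [hgg, Real.le_log_iff_exp_le hgpos]
    have h1 := Real.exp_one_lt_d9
    linarith only [h1, hg64]
  have hgg4 : gg ≤ g / 4 := by
    have hsg : Real.sqrt g * Real.sqrt g = g := Real.mul_self_sqrt hgpos.le
    have h8 : (8 : ℝ) ≤ Real.sqrt g := by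
      nlinarith only [hsg, hg64, Real.sqrt_nonneg g]
    have hl2 := log_le_two_sqrt' hgpos
    rw [hgg]
    nlinarith only [hl2, h8, hsg, Real.sqrt_nonneg g]
  set L := Real.log (R / σ) with hL
  -- rewrite the equation
  have heq : σ ^ 2 * L = a * g / (2 * Real.pi * l) := by
    rw [heq0, div_div_eq_mul_div, div_eq_div_iff (by positivity) (by positivity)]
    ring
  -- L > 1/2
  have hLhalf : 1 / 2 < L := by
    have h1 : Real.exp (1 / 2) < R / σ := by
      rw [lt_div_iff₀ hσpos]
      calc Real.exp (1/2) * σ = σ * Real.exp (1/2) := by ring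
        _ < R / Real.exp (1/2) * Real.exp (1/2) := by
            exact mul_lt_mul_of_pos_right hσR (Real.exp_pos _)
        _ = R := by field_simp
    have h2 := Real.log_lt_log (Real.exp_pos _) h1
    rwa [Real.log_exp] at h2
  have hLpos : 0 < L := by linarith only [hLhalf]
  set t := σ * Real.sqrt (Real.pi * l) / Real.sqrt a with ht_def
  have htpos : 0 < t := div_pos (mul_pos hσpos (Real.sqrt_pos.mpr hπl)) (Real.sqrt_pos.mpr ha)
  -- key identity t^2 * (2L) = g
  have heq' : σ ^ 2 * L * (2 * Real.pi * l) = a * g := by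
    rw [heq]; field_simp
  have ht2 : t ^ 2 * (2 * L) = g := by
    have h1 : t ^ 2 = σ ^ 2 * (Real.pi * l) / a := by
      rw [ht_def, div_pow, mul_pow, Real.sq_sqrt hπl.le, Real.sq_sqrt ha.le]
    rw [h1]
    field_simp
    linear_combination heq'
  -- log t identity
  have hlogt : Real.log t = Real.log σ + (Real.log Real.pi + g) / 2 - Real.log a / 2 := by
    rw [ht_def, Real.log_div (by positivity) (Real.sqrt_pos.mpr ha).ne',
      Real.log_mul hσpos.ne' (Real.sqrt_pos.mpr hπl).ne',
      Real.log_sqrt hπl.le, Real.log_sqrt ha.le,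
      Real.log_mul hπ.ne' hlpos.ne', ← hg]
  have hLlog : L = Real.log R - Real.log σ := by
    rw [hL, Real.log_div hR.ne' hσpos.ne']
  have hL_K : L = g / 2 + K - Real.log t := by
    rw [hLlog, hlogt, hK]; ring
  -- upper bound on log t : 2 log t ≤ gg
  have hlogt_up : 2 * Real.log t ≤ gg := by
    have ht2g : t ^ 2 ≤ g := by
      nlinarith only [ht2, hLhalf, sq_nonneg t]
    have h1 : Real.log (t ^ 2) ≤ gg := by
      rw [hgg]; exact Real.log_le_log (by positivity) ht2g
    rw [Real.log_pow] at h1; push_cast at h1; linarith only [h1]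
  -- lower bound machinery
  have hcpos : 0 < a * g / (2 * Real.pi * l) := by positivity
  have hσmul : Real.sqrt σ * Real.sqrt σ = σ := Real.mul_self_sqrt hσpos.le
  have hσs : (0 : ℝ) < Real.sqrt σ := Real.sqrt_pos.mpr hσpos
  have hc_up : a * g / (2 * Real.pi * l) ≤ 2 * Real.sqrt R * (σ * Real.sqrt σ) := by
    have hLle : L ≤ 2 * Real.sqrt (R / σ) := log_le_two_sqrt' (div_pos hR hσpos)
    have h2 : σ ^ 2 * L ≤ σ ^ 2 * (2 * Real.sqrt (R / σ)) :=
      mul_le_mul_of_nonneg_left hLle (sq_nonneg σ)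
    have h3 : σ ^ 2 * (2 * Real.sqrt (R / σ)) = 2 * Real.sqrt R * (σ * Real.sqrt σ) := by
      rw [Real.sqrt_div hR.le]
      field_simp
      linear_combination (-1 : ℝ) * hσmul
    linarith only [heq, h2, h3]
  have hlogc_le : Real.log (a * g / (2 * Real.pi * l)) ≤
      Real.log 2 + Real.log R / 2 + (3 / 2) * Real.log σ := by
    have h := Real.log_le_log hcpos hc_up
    rw [Real.log_mul (by positivity) (by positivity),
      Real.log_mul (by norm_num : (2:ℝ) ≠ 0) (Real.sqrt_pos.mpr hR).ne',
      Real.log_mul hσpos.ne' hσs.ne', Real.log_sqrt hR.le, Real.log_sqrt hσpos.le] at h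
    linarith only [h]
  have hlogc_eq : Real.log (a * g / (2 * Real.pi * l)) =
      Real.log a + gg - (Real.log 2 + Real.log Real.pi + g) := by
    rw [Real.log_div (by positivity) (by positivity),
      Real.log_mul ha.ne' hgpos.ne',
      Real.log_mul (by positivity : (2 * Real.pi : ℝ) ≠ 0) hlpos.ne',
      Real.log_mul (by norm_num : (2:ℝ) ≠ 0) hπ.ne', ← hg, ← hgg]
  have hlog2ub : Real.log 2 ≤ 1 := by
    have h1 := Real.log_two_lt_d9; linarith only [h1]
  have hlog2lb : (0 : ℝ) ≤ Real.log 2 := Real.log_nonneg (by norm_num)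
  -- bounds on L
  have hL_up : L ≤ 3 * g / 4 := by
    linarith only [hlogc_le, hlogc_eq, hLlog, hgg1, hRb.1, hRb.2, hab.1, hab.2,
      hπb.1, hπb.2, hlog2ub, hlog2lb, hg64]
  have hL_lo : g / 3 ≤ L := by
    have hKlb : -(g / 100) ≤ K := by
      rw [hK]; linarith only [hRb.1, hab.2, hπb.1, hgpos]
    linarith only [hL_K, hlogt_up, hgg4, hKlb, hgpos]
  -- bounds on t
  have ht2_lo : 2 / 3 ≤ t ^ 2 := by
    nlinarith only [ht2, hgpos, hL_up, sq_nonneg t]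
  have ht2_up : t ^ 2 ≤ 3 / 2 := by
    nlinarith only [ht2, hgpos, hL_lo, sq_nonneg t]
  have ht_lo : 1 / 2 ≤ t := by nlinarith only [ht2_lo, htpos]
  have ht_up : t ≤ 2 := by nlinarith only [ht2_up, htpos]
  have hlt1 : Real.log t ≤ 1 := by
    have h1 : Real.log t ≤ Real.log 2 := Real.log_le_log htpos ht_up
    linarith only [h1, hlog2ub]
  have hlt2 : (-1 : ℝ) ≤ Real.log t := by
    have h1 : Real.log (1 / 2) ≤ Real.log t := Real.log_le_log (by norm_num) ht_lo
    rw [one_div, Real.log_inv] at h1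
    linarith only [h1, hlog2ub]
  -- final estimate
  have hnum : (t ^ 2 - 1) * (2 * L) = 2 * Real.log t - 2 * K := by
    linear_combination ht2 - 2 * hL_K
  have hnum_up : (t ^ 2 - 1) * (2 * L) ≤ 2 + 2 * |K| := by
    rw [hnum]; linarith only [hlt1, neg_abs_le K]
  have hnum_lo : -(2 + 2 * |K|) ≤ (t ^ 2 - 1) * (2 * L) := by
    rw [hnum]; linarith only [hlt2, le_abs_self K]
  have h2L : (0 : ℝ) < 2 * L := by linarith only [hLpos]
  have habs2 : |t ^ 2 - 1| * (2 * L) ≤ 2 + 2 * |K| := by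
    calc |t ^ 2 - 1| * (2 * L) = |(t ^ 2 - 1) * (2 * L)| := by
          rw [abs_mul, abs_of_pos h2L]
      _ ≤ 2 + 2 * |K| := abs_le.mpr ⟨hnum_lo, hnum_up⟩
  have htm1 : |t - 1| ≤ |t ^ 2 - 1| := by
    have hfac : t ^ 2 - 1 = (t - 1) * (t + 1) := by ring
    rw [hfac, abs_mul, abs_of_pos (by linarith only [htpos] : (0:ℝ) < t + 1)]
    nlinarith only [abs_nonneg (t - 1), ht_lo]
  have h3 : |t ^ 2 - 1| * (2 * (g / 3)) ≤ |t ^ 2 - 1| * (2 * L) := by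
    nlinarith only [abs_nonneg (t ^ 2 - 1), hL_lo]
  have h4 : |t ^ 2 - 1| * g ≤ 3 + 3 * |K| := by
    linarith only [h3, habs2]
  rw [le_div_iff₀ hgpos]
  have h5 : |t - 1| * g ≤ |t ^ 2 - 1| * g :=
    mul_le_mul_of_nonneg_right htm1 hgpos.le
  have h6 : (0 : ℝ) ≤ (3 + 3 * |K|) * (gg - 1) := by
    have := abs_nonneg K
    have := hgg1
    nlinarith only [abs_nonneg K, hgg1]
  linarith only [h4, h5, h6]
end

section
/- Let S(y, x) = (1/2π)·ln(1/|y − x|) on ℝ² and let Q_θ(u, v) = −∫_{∂B_θ(x₀)} (∂v/∂ν)(∂u/∂x_i) − ∫_{∂B_θ(x₀)} (∂u/∂ν)(∂v/∂x_i) + ∫_{∂B_θ(x₀)} ⟨∇u, ∇v⟩ ν_i. Then for every θ > 0 and every i, h ∈ {1, 2}, Q_θ(S(x₀, ·), ∂_h S(x₀, ·)) = 0, where ∂_h denotes the partial derivative in the first argument. -/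
open Real Metric MeasureTheory

noncomputable abbrev E2 := EuclideanSpace ℝ (Fin 2)

/-- The fundamental solution `S(x₀, ·)` of `−Δ` in the plane. -/
noncomputable def Sfun (x₀ : E2) (x : E2) : ℝ := (1 / (2 * π)) * Real.log (1 / ‖x - x₀‖)

/-- `∂_h S(x₀, x) = (1/2π)·(x−x₀)_h/|x−x₀|²` (derivative in the first argument). -/
noncomputable def dSfun (x₀ : E2) (h : Fin 2) (x : E2) : ℝ :=
  (1 / (2 * π)) * (x h - x₀ h) / ‖x - x₀‖ ^ 2

open scoped RealInnerProductSpace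

lemma normsq_ne {x x₀ : E2} (hx : x ≠ x₀) : ‖x - x₀‖ ^ 2 ≠ 0 := by
  have h : x - x₀ ≠ 0 := sub_ne_zero.2 hx
  exact pow_ne_zero 2 (norm_ne_zero_iff.2 h)

lemma hasFDerivAt_normsq (x₀ x : E2) :
    HasFDerivAt (fun y : E2 => ‖y - x₀‖ ^ 2) (2 • innerSL ℝ (x - x₀)) x := by
  simpa using ((hasFDerivAt_id x).sub_const x₀).norm_sq

lemma fderiv_Sfun_apply (x₀ x : E2) (hx : x ≠ x₀) (v : E2) :
    fderiv ℝ (Sfun x₀) x v = -((1 / (2 * π)) * ⟪x - x₀, v⟫ / ‖x - x₀‖ ^ 2) := by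
  have hne := normsq_ne hx
  have hπ : (π : ℝ) ≠ 0 := pi_ne_zero
  have hS : Sfun x₀ = fun x => -(1 / (4 * π)) * Real.log (‖x - x₀‖ ^ 2) := by
    funext y
    rw [Sfun, one_div ‖y - x₀‖, Real.log_inv, Real.log_pow]
    push_cast
    ring
  have h2 : HasDerivAt Real.log (‖x - x₀‖ ^ 2)⁻¹ (‖x - x₀‖ ^ 2) := Real.hasDerivAt_log hne
  have h3 := (h2.comp_hasFDerivAt x (hasFDerivAt_normsq x₀ x)).const_mul (-(1 / (4 * π)))
  simp only [Function.comp_def] at h3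
  rw [hS, h3.fderiv]
  simp only [ContinuousLinearMap.coe_smul', Pi.smul_apply, ContinuousLinearMap.smul_apply,
    innerSL_apply_apply, smul_eq_mul]
  field_simp
  ring

lemma fderiv_dSfun_apply (x₀ : E2) (h : Fin 2) (x : E2) (hx : x ≠ x₀) (v : E2) :
    fderiv ℝ (dSfun x₀ h) x v =
      ((1 / (2 * π)) * v h * ‖x - x₀‖ ^ 2
        - (1 / (2 * π)) * (x h - x₀ h) * (2 * ⟪x - x₀, v⟫)) / (‖x - x₀‖ ^ 2) ^ 2 := by
  have hne := normsq_ne hx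
  have hπ : (π : ℝ) ≠ 0 := pi_ne_zero
  have hd : dSfun x₀ h = fun x =>
      ((1 / (2 * π)) * (x h - x₀ h)) * (‖x - x₀‖ ^ 2)⁻¹ := by
    funext y; rw [dSfun, div_eq_mul_inv]
  have hc : HasFDerivAt (fun x : E2 => (1 / (2 * π)) * (x h - x₀ h))
      ((1 / (2 * π)) • (EuclideanSpace.proj h : E2 →L[ℝ] ℝ)) x := by
    have := (((EuclideanSpace.proj h : E2 →L[ℝ] ℝ).hasFDerivAt (x := x)).sub_const
      (x₀ h)).const_mul (1 / (2 * π))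
    simpa using this
  have hinv : HasDerivAt (fun t : ℝ => t⁻¹) (-((‖x - x₀‖ ^ 2) ^ 2)⁻¹) (‖x - x₀‖ ^ 2) := by
    simpa using hasDerivAt_inv hne
  have hdenom := hinv.comp_hasFDerivAt x (hasFDerivAt_normsq x₀ x)
  have hmul := hc.mul hdenom
  simp only [Function.comp_def] at hmul
  have hmul' : HasFDerivAt (fun x : E2 => (1 / (2 * π)) * (x h - x₀ h) * (‖x - x₀‖ ^ 2)⁻¹) _ x :=
    hmul
  rw [hd, hmul'.fderiv]
  simp only [ContinuousLinearMap.add_apply, ContinuousLinearMap.coe_smul', Pi.smul_apply,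
    ContinuousLinearMap.smul_apply, innerSL_apply_apply, smul_eq_mul]
  have hproj : ∀ w : E2, (EuclideanSpace.proj h : E2 →L[ℝ] ℝ) w = w h := fun _ => rfl
  rw [hproj]
  field_simp
  ring

lemma odd_integral_zero (x₀ : E2) (θ : ℝ) (L : E2 ≃ₗᵢ[ℝ] E2) (f : E2 → ℝ)
    (hf : ∀ x ∈ sphere x₀ θ, f (x₀ + L (x - x₀)) = -f x) :
    ∫ x in sphere x₀ θ, f x ∂μH[1] = 0 := by
  set T : E2 ≃ᵢ E2 := ((IsometryEquiv.addRight (-x₀)).trans L.toIsometryEquiv).trans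
      (IsometryEquiv.addLeft x₀) with hTdef
  have hT : ∀ x, T x = x₀ + L (x - x₀) := fun x => by
    simp [hTdef, IsometryEquiv.trans_apply, sub_eq_add_neg]
  have hTs : T ⁻¹' (sphere x₀ θ) = sphere x₀ θ := by
    ext x
    simp only [Set.mem_preimage, mem_sphere_iff_norm, hT x]
    rw [add_sub_cancel_left, L.norm_map]
  have mp : MeasurePreserving T μH[1] μH[1] :=
    ⟨T.isometry.continuous.measurable, T.map_hausdorffMeasure 1⟩
  have me : MeasurableEmbedding T := T.toHomeomorph.measurableEmbedding
  have mp2 := mp.restrict_preimage_emb me (sphere x₀ θ)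
  rw [hTs] at mp2
  have key : ∫ x in sphere x₀ θ, f (T x) ∂μH[1] = ∫ x in sphere x₀ θ, f x ∂μH[1] :=
    mp2.integral_comp me f
  have key2 : ∫ x in sphere x₀ θ, f (T x) ∂μH[1] = -∫ x in sphere x₀ θ, f x ∂μH[1] := by
    rw [← integral_neg]
    exact setIntegral_congr_fun Metric.isClosed_sphere.measurableSet fun x hx => by rw [hT x]; exact hf x hx
  linarith

theorem stmt7 (x₀ : E2) (θ : ℝ) (hθ : 0 < θ) (i h : Fin 2) :
    -(∫ x in sphere x₀ θ,
        (fderiv ℝ (dSfun x₀ h) x (θ⁻¹ • (x - x₀)))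
          * (fderiv ℝ (Sfun x₀) x (EuclideanSpace.single i 1)) ∂μH[1])
      - (∫ x in sphere x₀ θ,
          (fderiv ℝ (Sfun x₀) x (θ⁻¹ • (x - x₀)))
            * (fderiv ℝ (dSfun x₀ h) x (EuclideanSpace.single i 1)) ∂μH[1])
      + (∫ x in sphere x₀ θ,
          (∑ j : Fin 2, (fderiv ℝ (Sfun x₀) x (EuclideanSpace.single j 1))
            * (fderiv ℝ (dSfun x₀ h) x (EuclideanSpace.single j 1)))
            * (θ⁻¹ * (x i - x₀ i)) ∂μH[1])
    = 0 := by
  have hπ : (π : ℝ) ≠ 0 := pi_ne_zero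
  have hθ' : θ ≠ 0 := hθ.ne'
  have hnorm : ∀ x ∈ sphere x₀ θ, ‖x - x₀‖ = θ := fun x hx => by
    rwa [mem_sphere_iff_norm] at hx
  have hx_ne : ∀ x ∈ sphere x₀ θ, x ≠ x₀ := fun x hx hc => by
    have := hnorm x hx
    rw [hc, sub_self, norm_zero] at this
    exact hθ' this.symm
  have hinner_rad : ∀ x ∈ sphere x₀ θ, ⟪x - x₀, θ⁻¹ • (x - x₀)⟫ = θ := fun x hx => by
    rw [real_inner_smul_right, real_inner_self_eq_norm_sq, hnorm x hx]
    field_simp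
  have hinner_single : ∀ (x : E2) (j : Fin 2),
      ⟪x - x₀, EuclideanSpace.single j (1 : ℝ)⟫ = x j - x₀ j := fun x j => by
    rw [EuclideanSpace.inner_single_right]
    simp
  have hrad_h : ∀ x : E2, (θ⁻¹ • (x - x₀)) h = θ⁻¹ * (x h - x₀ h) := fun x => by
    simp [PiLp.smul_apply, PiLp.sub_apply]
  have hsingle_h : ∀ j : Fin 2, (EuclideanSpace.single j (1 : ℝ)) h
      = if j = h then 1 else 0 := fun j => by
    rcases eq_or_ne j h with rfl | hjh
    · simp [EuclideanSpace.single_apply]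
    · simp [EuclideanSpace.single_apply, hjh, Ne.symm hjh]
  -- closed forms
  have hS_single : ∀ x ∈ sphere x₀ θ, ∀ j : Fin 2,
      fderiv ℝ (Sfun x₀) x (EuclideanSpace.single j 1)
        = -((1 / (2 * π)) * (x j - x₀ j) / θ ^ 2) := fun x hx j => by
    rw [fderiv_Sfun_apply x₀ x (hx_ne x hx), hinner_single x j, hnorm x hx]
  have hS_rad : ∀ x ∈ sphere x₀ θ,
      fderiv ℝ (Sfun x₀) x (θ⁻¹ • (x - x₀)) = -((1 / (2 * π)) * θ / θ ^ 2) := fun x hx => by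
    rw [fderiv_Sfun_apply x₀ x (hx_ne x hx), hinner_rad x hx, hnorm x hx]
  have hdS_single : ∀ x ∈ sphere x₀ θ, ∀ j : Fin 2,
      fderiv ℝ (dSfun x₀ h) x (EuclideanSpace.single j 1)
        = ((1 / (2 * π)) * (if j = h then 1 else 0) * θ ^ 2
            - (1 / (2 * π)) * (x h - x₀ h) * (2 * (x j - x₀ j))) / (θ ^ 2) ^ 2 :=
    fun x hx j => by
      rw [fderiv_dSfun_apply x₀ h x (hx_ne x hx), hinner_single x j, hnorm x hx, hsingle_h j]
  have hdS_rad : ∀ x ∈ sphere x₀ θ,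
      fderiv ℝ (dSfun x₀ h) x (θ⁻¹ • (x - x₀))
        = ((1 / (2 * π)) * (θ⁻¹ * (x h - x₀ h)) * θ ^ 2
            - (1 / (2 * π)) * (x h - x₀ h) * (2 * θ)) / (θ ^ 2) ^ 2 := fun x hx => by
      rw [fderiv_dSfun_apply x₀ h x (hx_ne x hx), hinner_rad x hx, hnorm x hx, hrad_h x]
  have hsum_sq : ∀ x ∈ sphere x₀ θ,
      (x 0 - x₀ 0) ^ 2 + (x 1 - x₀ 1) ^ 2 = θ ^ 2 := fun x hx => by
    have h1 : ‖x - x₀‖ ^ 2 = θ ^ 2 := by rw [hnorm x hx]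
    rw [← h1, EuclideanSpace.norm_eq]
    rw [Real.sq_sqrt (by positivity)]
    simp [PiLp.sub_apply, Fin.sum_univ_two]
  -- first integral equals third integral
  have e13 : (∫ x in sphere x₀ θ,
        (fderiv ℝ (dSfun x₀ h) x (θ⁻¹ • (x - x₀)))
          * (fderiv ℝ (Sfun x₀) x (EuclideanSpace.single i 1)) ∂μH[1])
      = (∫ x in sphere x₀ θ,
          (∑ j : Fin 2, (fderiv ℝ (Sfun x₀) x (EuclideanSpace.single j 1))
            * (fderiv ℝ (dSfun x₀ h) x (EuclideanSpace.single j 1)))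
            * (θ⁻¹ * (x i - x₀ i)) ∂μH[1]) := by
    refine setIntegral_congr_fun Metric.isClosed_sphere.measurableSet fun x hx => ?_
    rw [hdS_rad x hx, hS_single x hx i, Fin.sum_univ_two,
      hS_single x hx 0, hS_single x hx 1, hdS_single x hx 0, hdS_single x hx 1]
    have hs := hsum_sq x hx
    fin_cases h
    · simp only [Fin.isValue, if_true, if_false, reduceIte, Fin.zero_eta, Fin.mk_one,
        one_ne_zero, zero_ne_one]
      field_simp
      linear_combination (-2 * (x i - x₀ i) * (x 0 - x₀ 0)) * hs
    · simp only [Fin.isValue, if_true, if_false, reduceIte, Fin.zero_eta, Fin.mk_one,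
        one_ne_zero, zero_ne_one]
      field_simp
      linear_combination (-2 * (x i - x₀ i) * (x 1 - x₀ 1)) * hs
  -- second integral is zero
  have e2 : (∫ x in sphere x₀ θ,
          (fderiv ℝ (Sfun x₀) x (θ⁻¹ • (x - x₀)))
            * (fderiv ℝ (dSfun x₀ h) x (EuclideanSpace.single i 1)) ∂μH[1]) = 0 := by
    have hconv : (∫ x in sphere x₀ θ,
          (fderiv ℝ (Sfun x₀) x (θ⁻¹ • (x - x₀)))
            * (fderiv ℝ (dSfun x₀ h) x (EuclideanSpace.single i 1)) ∂μH[1])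
        = -(1 / (4 * π ^ 2 * θ ^ 5)) * ∫ x in sphere x₀ θ,
            ((if i = h then θ ^ 2 else 0)
              - 2 * (x h - x₀ h) * (x i - x₀ i)) ∂μH[1] := by
      rw [← integral_const_mul]
      refine setIntegral_congr_fun Metric.isClosed_sphere.measurableSet fun x hx => ?_
      rw [hS_rad x hx, hdS_single x hx i]
      by_cases hih : i = h <;> simp only [hih, if_true, if_false, reduceIte] <;>
        field_simp <;> ring
    rw [hconv]
    suffices hsuf : (∫ x in sphere x₀ θ,
        ((if i = h then θ ^ 2 else 0)
          - 2 * (x h - x₀ h) * (x i - x₀ i)) ∂μH[1]) = 0 by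
      rw [hsuf]; ring
    by_cases hih : i = h
    · -- use the swap of coordinates
      subst hih
      fin_cases i
      · refine odd_integral_zero x₀ θ
          (LinearIsometryEquiv.piLpCongrLeft 2 ℝ ℝ (Equiv.swap (0 : Fin 2) 1)) _ fun x hx => ?_
        have hs := hsum_sq x hx
        show θ ^ 2 - 2 * (x₀ 0 + (x 1 - x₀ 1) - x₀ 0) * (x₀ 0 + (x 1 - x₀ 1) - x₀ 0)
          = -(θ ^ 2 - 2 * (x 0 - x₀ 0) * (x 0 - x₀ 0))
        linear_combination (-2 : ℝ) * hs
      · refine odd_integral_zero x₀ θ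
          (LinearIsometryEquiv.piLpCongrLeft 2 ℝ ℝ (Equiv.swap (0 : Fin 2) 1)) _ fun x hx => ?_
        have hs := hsum_sq x hx
        show θ ^ 2 - 2 * (x₀ 1 + (x 0 - x₀ 0) - x₀ 1) * (x₀ 1 + (x 0 - x₀ 0) - x₀ 1)
          = -(θ ^ 2 - 2 * (x 1 - x₀ 1) * (x 1 - x₀ 1))
        linear_combination (-2 : ℝ) * hs
    · -- negate coordinate i
      refine odd_integral_zero x₀ θ
        (LinearIsometryEquiv.piLpCongrRight 2
          (fun j : Fin 2 => if j = i then LinearIsometryEquiv.neg ℝ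
            else LinearIsometryEquiv.refl ℝ ℝ)) _ fun x hx => ?_
      have happ : ∀ k : Fin 2,
          ((x₀ + (LinearIsometryEquiv.piLpCongrRight 2
            (fun j : Fin 2 => if j = i then LinearIsometryEquiv.neg ℝ
              else LinearIsometryEquiv.refl ℝ ℝ)) (x - x₀)) k - x₀ k)
          = (if k = i then LinearIsometryEquiv.neg ℝ
              else LinearIsometryEquiv.refl ℝ ℝ) ((x - x₀) k) := fun k => by
        simp [LinearIsometryEquiv.piLpCongrRight_apply, PiLp.add_apply]
      have hhi : ¬ (h = i) := fun hc => hih hc.symm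
      simp only [happ]
      simp only [if_pos rfl, if_neg hhi, if_neg hih, eq_self_iff_true, if_true,
        LinearIsometryEquiv.coe_neg, LinearIsometryEquiv.coe_refl, id_eq, PiLp.sub_apply]
      ring
  rw [e13, e2]
  ring
end
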